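/- Let p be an odd prime and let j be a nonnegative integer. If j = kp+r with integers 0 ≤ k < p and 0 ≤ r < p, then St^{(1,j)}(Q_{2,1}) = (k+1)·Q_{2,0}^{r+1}·Σ_{i=0}^{k} (−1)^i·C(k,i)·C(r+i,i)·Q_{2,0}^{(k−i)p}·Q_{2,1}^{i(p+1)}; otherwise (i.e. if j ≥ p²) St^{(1,j)}(Q_{2,1}) = 0. (Binomial coefficients and the factor (k+1) are reduced mod p.) -/

import Mathlib

set_option maxHeartbeats 2000000

open MvPolynomial Finset

/-- The total Steenrod-Milnor operation `φ : R → R[t₁,t₂]`,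
sending `y_k ↦ y_k + y_k^p t₁ + y_k^{p²} t₂`. Here `R = F_p[y₁,y₂]`
and `R[t₁,t₂]` is modelled as `MvPolynomial (Fin 2) R`. -/
noncomputable def phi (p : ℕ) :
    MvPolynomial (Fin 2) (ZMod p) →ₐ[ZMod p]
      MvPolynomial (Fin 2) (MvPolynomial (Fin 2) (ZMod p)) :=
  aeval (fun k => C (X k) + C (X k ^ p) * X 0 + C (X k ^ (p ^ 2)) * X 1)

/-- The Steenrod-Milnor operation `St^{(i,j)}` : the coefficient of
`t₁^i t₂^j` in `φ f`. -/
noncomputable def St (p i j : ℕ) (f : MvPolynomial (Fin 2) (ZMod p)) :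
    MvPolynomial (Fin 2) (ZMod p) :=
  coeff (Finsupp.single (0 : Fin 2) i + Finsupp.single (1 : Fin 2) j) (phi p f)

/-- `L₂ = y₁ y₂^p - y₁^p y₂`. -/
noncomputable def L2 (p : ℕ) : MvPolynomial (Fin 2) (ZMod p) :=
  X 0 * X 1 ^ p - X 0 ^ p * X 1

/-- `L_{2,0} = y₁^p y₂^{p²} - y₁^{p²} y₂^p`. -/
noncomputable def L20 (p : ℕ) : MvPolynomial (Fin 2) (ZMod p) :=
  X 0 ^ p * X 1 ^ (p ^ 2) - X 0 ^ (p ^ 2) * X 1 ^ p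

/-- `L_{2,1} = y₁ y₂^{p²} - y₁^{p²} y₂`. -/
noncomputable def L21 (p : ℕ) : MvPolynomial (Fin 2) (ZMod p) :=
  X 0 * X 1 ^ (p ^ 2) - X 0 ^ (p ^ 2) * X 1

abbrev Rp (p : ℕ) := MvPolynomial (Fin 2) (ZMod p)
abbrev Ap (p : ℕ) := MvPolynomial (Fin 1) (Rp p)

lemma cons_single (i j : ℕ) :
    Finsupp.cons i (Finsupp.single (0 : Fin 1) j)
      = Finsupp.single (0 : Fin 2) i + Finsupp.single (1 : Fin 2) j := by
  ext a
  refine Fin.cases ?_ (fun b => ?_) a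
  · simp [Finsupp.cons_zero]
  · have hb : b = 0 := Subsingleton.elim _ _
    subst hb
    rw [Finsupp.cons_succ]
    simp [Finsupp.single_apply, Fin.succ_zero_eq_one]

lemma St_eq_coeff (p i j : ℕ) (f : MvPolynomial (Fin 2) (ZMod p)) :
    St p i j f = coeff (Finsupp.single (0 : Fin 1) j)
      (((MvPolynomial.finSuccEquiv (MvPolynomial (Fin 2) (ZMod p)) 1) (phi p f)).coeff i) := by
  rw [St, MvPolynomial.finSuccEquiv_coeff_coeff, cons_single]

lemma L2_ne_zero (p : ℕ) (hp : p.Prime) : L2 p ≠ 0 := by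
  haveI : Fact p.Prime := ⟨hp⟩
  intro h
  have h1 : coeff (Finsupp.single (0 : Fin 2) 1 + Finsupp.single 1 p) (L2 p) = 1 := by
    rw [L2]
    rw [coeff_sub]
    rw [show (X (0 : Fin 2) * X 1 ^ p : MvPolynomial (Fin 2) (ZMod p))
        = monomial (Finsupp.single 0 1 + Finsupp.single 1 p) 1 by
      rw [X_pow_eq_monomial, X, monomial_mul, one_mul]]
    rw [show (X (0 : Fin 2) ^ p * X 1 : MvPolynomial (Fin 2) (ZMod p))
        = monomial (Finsupp.single 0 p + Finsupp.single 1 1) 1 by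
      rw [X_pow_eq_monomial, X, monomial_mul, one_mul]]
    rw [coeff_monomial, coeff_monomial, if_pos rfl, if_neg, sub_zero]
    intro habs
    have h2 := DFunLike.congr_fun habs 0
    have h3 := hp.one_lt
    simp [Finsupp.single_apply] at h2
    omega
  rw [h, coeff_zero] at h1
  exact one_ne_zero h1.symm





section
variable (p : ℕ) (hp : p.Prime) (Q0 Q1 : Rp p)
  (hQ0 : Q0 * L2 p = L20 p) (hQ1 : Q1 * L2 p = L21 p)

include hp hQ0 hQ1 in
lemma hrel (k : Fin 2) : (X k : Rp p) ^ (p^2) = Q1 * X k ^ p - Q0 * X k := by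
  haveI : Fact p.Prime := ⟨hp⟩
  have hL2 := L2_ne_zero p hp
  have aux : ∀ y : Rp p, y^(p^2) * L2 p - y^p * L21 p + y * L20 p = 0 →
      y^(p^2) = Q1 * y^p - Q0 * y := by
    intro y hy
    have key : (y ^ (p^2) - (Q1 * y ^ p - Q0 * y)) * L2 p = 0 := by
      have h1 : (y ^ (p^2) - (Q1 * y ^ p - Q0 * y)) * L2 p
          = y ^ (p^2) * L2 p - y ^ p * (Q1 * L2 p) + y * (Q0 * L2 p) := by ring
      rw [h1, hQ0, hQ1, hy]
    rcases mul_eq_zero.mp key with h | h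
    · exact sub_eq_zero.mp h
    · exact absurd h hL2
  fin_cases k
  · exact aux (X 0) (by simp only [L2, L20, L21]; ring)
  · exact aux (X 1) (by simp only [L2, L20, L21]; ring)

include hp hQ0 hQ1 in
lemma hrel3 (k : Fin 2) : (X k : Rp p) ^ (p^3)
    = (Q1^p * Q1 - Q0^p) * X k ^ p - Q1^p * Q0 * X k := by
  haveI : Fact p.Prime := ⟨hp⟩
  have h2 := hrel p hp Q0 Q1 hQ0 hQ1 k
  calc (X k : Rp p) ^ (p^3) = ((X k : Rp p) ^ (p^2))^p := by
        rw [← pow_mul, ← pow_succ]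
    _ = (Q1 * X k ^ p - Q0 * X k)^p := by rw [h2]
    _ = Q1^p * ((X k :Rp p)^p)^p - Q0^p * (X k:Rp p)^p := by
        rw [sub_pow_char, mul_pow, mul_pow]
    _ = Q1^p * (X k:Rp p)^(p^2) - Q0^p * (X k:Rp p)^p := by
        rw [← pow_mul, ← pow_two]
    _ = _ := by rw [h2]; ring

include hp hQ0 hQ1 in
lemma hrel4 (k : Fin 2) : (X k : Rp p) ^ (p^4)
    = ((Q1^(p+1) - Q0^p)^p * Q1 - Q1^(p^2) * Q0^p) * X k ^ p
      - (Q1^(p+1) - Q0^p)^p * Q0 * X k := by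
  haveI : Fact p.Prime := ⟨hp⟩
  have h2 := hrel p hp Q0 Q1 hQ0 hQ1 k
  have h3 := hrel3 p hp Q0 Q1 hQ0 hQ1 k
  calc (X k : Rp p) ^ (p^4) = ((X k : Rp p) ^ (p^3))^p := by
        rw [← pow_mul, ← pow_succ]
    _ = ((Q1^p * Q1 - Q0^p) * X k ^ p - Q1^p * Q0 * X k)^p := by rw [h3]
    _ = (Q1^p * Q1 - Q0^p)^p * ((X k:Rp p)^p)^p - (Q1^p * Q0)^p * (X k:Rp p)^p := by
        rw [sub_pow_char, mul_pow, mul_pow]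
    _ = (Q1^p * Q1 - Q0^p)^p * (X k:Rp p)^(p^2) - (Q1^p * Q0)^p * (X k:Rp p)^p := by
        rw [← pow_mul, ← pow_two]
    _ = _ := by
        rw [h2, sub_pow_char, sub_pow_char, mul_pow, mul_pow]
        ring
end

section
variable (p : ℕ) (hp : p.Prime) (Q0 Q1 : Rp p)
  (hQ0 : Q0 * L2 p = L20 p) (hQ1 : Q1 * L2 p = L21 p)

noncomputable def uA (k : Fin 2) : Ap p := C (X k) + C (X k ^ (p^2)) * X 0
noncomputable def DDA : Ap p :=
  (1 - C Q0 * X 0) * (1 - C (Q0^p) * X 0^p) + C (Q1^(p+1)) * X 0^p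
noncomputable def BbA : Ap p := C (Q0 * Q1^p) * X 0^p
noncomputable def CCA : Ap p :=
  C Q1 + C ((Q1^(p+1) - Q0^p)^p * Q1 - Q1^(p^2) * Q0^p) * X 0^(p^2)
    + C (Q1^(p^2) * Q0^(p+1)) * X 0^(p^2+1)
noncomputable def DdA : Ap p :=
  C Q0 * (1 + C ((Q1^(p+1) - Q0^p)^p) * X 0^(p^2))

include hp in
lemma uA_pow_p (k : Fin 2) :
    (uA p k)^p = C ((X k : Rp p)^p) + C ((X k : Rp p)^(p^3)) * X 0^p := by
  haveI : Fact p.Prime := ⟨hp⟩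
  have e3 : p^3 = p^2 * p := by ring
  rw [uA, add_pow_char, mul_pow, ← map_pow, ← map_pow, e3, pow_mul]

include hp in
lemma uA_pow_p2 (k : Fin 2) :
    (uA p k)^(p^2) = C ((X k : Rp p)^(p^2)) + C ((X k : Rp p)^(p^4)) * X 0^(p^2) := by
  haveI : Fact p.Prime := ⟨hp⟩
  have e4 : p^4 = p^2 * p^2 := by ring
  rw [uA, show p^2 = p^2 from rfl]
  rw [show ((C (X k) + C ((X k:Rp p) ^ p ^ 2) * X 0 : Ap p)) ^ (p^2)
      = (C (X k) : Ap p)^(p^2) + (C ((X k:Rp p) ^ p ^ 2) * X 0 : Ap p)^(p^2)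
    from add_pow_char_pow _ _ p 2]
  rw [mul_pow, ← map_pow, ← map_pow, e4, pow_mul]

include hp hQ0 hQ1 in
lemma eL2a : uA p 0 * (uA p 1)^p - (uA p 0)^p * uA p 1 = C (L2 p) * DDA p Q0 Q1 := by
  have c2 : ∀ k, (C ((X k : Rp p)^(p^2)) : Ap p)
      = C Q1 * C ((X k:Rp p)^p) - C Q0 * C (X k) := by
    intro k; rw [hrel p hp Q0 Q1 hQ0 hQ1 k]; rw [map_sub, map_mul, map_mul]
  have c3 : ∀ k, (C ((X k : Rp p)^(p^3)) : Ap p)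
      = (C Q1^p * C Q1 - C Q0^p) * C ((X k:Rp p)^p) - C Q1^p * C Q0 * C (X k) := by
    intro k; rw [hrel3 p hp Q0 Q1 hQ0 hQ1 k]
    simp only [map_sub, map_mul, map_pow]
  rw [uA_pow_p p hp 0, uA_pow_p p hp 1, uA, uA, c2 0, c2 1, c3 0, c3 1, DDA, L2]
  simp only [map_sub, map_mul, map_pow, map_add, map_one]
  ring

include hp hQ0 hQ1 in
lemma eL2b : C ((X 0:Rp p)^p) * (uA p 1)^p - (uA p 0)^p * C ((X 1:Rp p)^p)
    = C (L2 p) * BbA p Q0 Q1 := by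
  have c3 : ∀ k, (C ((X k : Rp p)^(p^3)) : Ap p)
      = (C Q1^p * C Q1 - C Q0^p) * C ((X k:Rp p)^p) - C Q1^p * C Q0 * C (X k) := by
    intro k; rw [hrel3 p hp Q0 Q1 hQ0 hQ1 k]
    simp only [map_sub, map_mul, map_pow]
  rw [uA_pow_p p hp 0, uA_pow_p p hp 1, c3 0, c3 1, BbA, L2]
  simp only [map_sub, map_mul, map_pow, map_add, map_one]
  ring

include hp hQ0 hQ1 in
lemma eL21a : uA p 0 * (uA p 1)^(p^2) - (uA p 0)^(p^2) * uA p 1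
    = C (L2 p) * CCA p Q0 Q1 := by
  have c2 : ∀ k, (C ((X k : Rp p)^(p^2)) : Ap p)
      = C Q1 * C ((X k:Rp p)^p) - C Q0 * C (X k) := by
    intro k; rw [hrel p hp Q0 Q1 hQ0 hQ1 k]; rw [map_sub, map_mul, map_mul]
  have c4 : ∀ k, (C ((X k : Rp p)^(p^4)) : Ap p)
      = ((C Q1^(p+1) - C Q0^p)^p * C Q1 - C Q1^(p^2) * C Q0^p) * C ((X k:Rp p)^p)
        - (C Q1^(p+1) - C Q0^p)^p * C Q0 * C (X k) := by
    intro k; rw [hrel4 p hp Q0 Q1 hQ0 hQ1 k]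
    simp only [map_sub, map_mul, map_pow]
  rw [uA_pow_p2 p hp 0, uA_pow_p2 p hp 1, uA, uA, c4 0, c4 1, c2 0, c2 1, CCA, L2]
  simp only [map_sub, map_mul, map_pow, map_add, map_one]
  ring

include hp hQ0 hQ1 in
lemma eL21b : C ((X 0:Rp p)^p) * (uA p 1)^(p^2) - (uA p 0)^(p^2) * C ((X 1:Rp p)^p)
    = C (L2 p) * DdA p Q0 Q1 := by
  have c2 : ∀ k, (C ((X k : Rp p)^(p^2)) : Ap p)
      = C Q1 * C ((X k:Rp p)^p) - C Q0 * C (X k) := by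
    intro k; rw [hrel p hp Q0 Q1 hQ0 hQ1 k]; rw [map_sub, map_mul, map_mul]
  have c4 : ∀ k, (C ((X k : Rp p)^(p^4)) : Ap p)
      = ((C Q1^(p+1) - C Q0^p)^p * C Q1 - C Q1^(p^2) * C Q0^p) * C ((X k:Rp p)^p)
        - (C Q1^(p+1) - C Q0^p)^p * C Q0 * C (X k) := by
    intro k; rw [hrel4 p hp Q0 Q1 hQ0 hQ1 k]
    simp only [map_sub, map_mul, map_pow]
  rw [uA_pow_p2 p hp 0, uA_pow_p2 p hp 1, c4 0, c4 1, c2 0, c2 1, DdA, L2]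
  simp only [map_sub, map_mul, map_pow, map_add, map_one]
  ring
end


section
variable (p : ℕ) (hp : p.Prime) (Q0 Q1 : Rp p)
  (hQ0 : Q0 * L2 p = L20 p) (hQ1 : Q1 * L2 p = L21 p)

lemma fse_C (r : Rp p) :
    MvPolynomial.finSuccEquiv (Rp p) 1 (C r) = Polynomial.C (C r) := by
  simp [MvPolynomial.finSuccEquiv_apply]

lemma PhiX (k : Fin 2) :
    MvPolynomial.finSuccEquiv (Rp p) 1 (phi p (X k))
      = Polynomial.C (uA p k) + Polynomial.C (C ((X k : Rp p)^p)) * Polynomial.X := by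
  rw [phi, aeval_X]
  rw [map_add, map_add, map_mul, map_mul, finSuccEquiv_X_zero,
    fse_C, fse_C, fse_C, (show (1 : Fin 2) = Fin.succ 0 from rfl), finSuccEquiv_X_succ, uA]
  rw [map_add, map_mul]
  ring

include hp in
lemma hCpow (a b : Ap p) :
    (Polynomial.C a + Polynomial.C b * Polynomial.X : Polynomial (Ap p))^p
      = Polynomial.C (a^p) + Polynomial.C (b^p) * Polynomial.X^p := by
  haveI : Fact p.Prime := ⟨hp⟩
  rw [add_pow_char, mul_pow, ← map_pow, ← map_pow]

include hp in
lemma hCpow2 (a b : Ap p) :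
    (Polynomial.C a + Polynomial.C b * Polynomial.X : Polynomial (Ap p))^(p^2)
      = Polynomial.C (a^(p^2)) + Polynomial.C (b^(p^2)) * Polynomial.X^(p^2) := by
  haveI : Fact p.Prime := ⟨hp⟩
  rw [show ((Polynomial.C a + Polynomial.C b * Polynomial.X : Polynomial (Ap p)))^(p^2)
      = (Polynomial.C a : Polynomial (Ap p))^(p^2)
        + (Polynomial.C b * Polynomial.X : Polynomial (Ap p))^(p^2)
    from add_pow_char_pow _ _ p 2]
  rw [mul_pow, ← map_pow, ← map_pow]

include hp hQ0 hQ1 in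
lemma PsiL2 : MvPolynomial.finSuccEquiv (Rp p) 1 (phi p (L2 p))
    = Polynomial.C (C (L2 p) * DDA p Q0 Q1)
      + Polynomial.C (C (L2 p) * BbA p Q0 Q1) * Polynomial.X
      + (Polynomial.C (uA p 0 * C ((X 1:Rp p)^(p^2)) - C ((X 0:Rp p)^(p^2)) * uA p 1)
         + Polynomial.C (C ((X 0:Rp p)^p) * C ((X 1:Rp p)^(p^2))
            - C ((X 0:Rp p)^(p^2)) * C ((X 1:Rp p)^p)) * Polynomial.X)
        * Polynomial.X^p := by
  haveI : Fact p.Prime := ⟨hp⟩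
  rw [← eL2a p hp Q0 Q1 hQ0 hQ1, ← eL2b p hp Q0 Q1 hQ0 hQ1]
  rw [L2]
  simp only [map_sub, map_mul, map_pow]
  rw [PhiX p 0, PhiX p 1, hCpow p hp, hCpow p hp, uA_pow_p p hp 0, uA_pow_p p hp 1, uA, uA]
  simp only [map_sub, map_mul, map_pow, map_add]
  simp only [add_pow_char, mul_pow]
  ring

include hp hQ0 hQ1 in
lemma PsiL21 : MvPolynomial.finSuccEquiv (Rp p) 1 (phi p (L21 p))
    = Polynomial.C (C (L2 p) * CCA p Q0 Q1)
      + Polynomial.C (C (L2 p) * DdA p Q0 Q1) * Polynomial.X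
      + (Polynomial.C (uA p 0 * (C ((X 1:Rp p)^p))^(p^2) - (C ((X 0:Rp p)^p))^(p^2) * uA p 1)
         + Polynomial.C (C ((X 0:Rp p)^p) * (C ((X 1:Rp p)^p))^(p^2)
            - (C ((X 0:Rp p)^p))^(p^2) * C ((X 1:Rp p)^p)) * Polynomial.X)
        * Polynomial.X^(p^2) := by
  haveI : Fact p.Prime := ⟨hp⟩
  have e1 := eL21a p hp Q0 Q1 hQ0 hQ1
  have e2 := eL21b p hp Q0 Q1 hQ0 hQ1
  rw [← e1, ← e2, L21]
  simp only [map_sub, map_mul, map_pow]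
  rw [PhiX p 0, PhiX p 1, hCpow2 p hp, hCpow2 p hp, uA_pow_p2 p hp 0, uA_pow_p2 p hp 1, uA, uA]
  simp only [map_sub, map_mul, map_pow, map_add]
  simp only [add_pow_char_pow, mul_pow]
  ring
end

section
variable (p : ℕ) (hp : p.Prime) (Q0 Q1 : Rp p)
  (hQ0 : Q0 * L2 p = L20 p) (hQ1 : Q1 * L2 p = L21 p)

include hp hQ0 hQ1 in
lemma Gform : (MvPolynomial.finSuccEquiv (Rp p) 1 (phi p Q1)).coeff 1
    = C Q0 * (1 - C Q0 * X 0) * (DDA p Q0 Q1)^(p-2) := by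
  haveI : Fact p.Prime := ⟨hp⟩
  have hp2 := hp.two_le
  have hpsq : 4 ≤ p^2 := by nlinarith
  have hmul : (MvPolynomial.finSuccEquiv (Rp p) 1 (phi p Q1))
      * (MvPolynomial.finSuccEquiv (Rp p) 1 (phi p (L2 p)))
      = MvPolynomial.finSuccEquiv (Rp p) 1 (phi p (L21 p)) := by
    rw [← map_mul, ← map_mul, hQ1]
  have hc0L2 : (MvPolynomial.finSuccEquiv (Rp p) 1 (phi p (L2 p))).coeff 0
      = C (L2 p) * DDA p Q0 Q1 := by
    rw [PsiL2 p hp Q0 Q1 hQ0 hQ1]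
    rw [Polynomial.coeff_add, Polynomial.coeff_add, Polynomial.coeff_mul_X_pow',
      if_neg (by omega : ¬ p ≤ 0)]
    simp
  have hc1L2 : (MvPolynomial.finSuccEquiv (Rp p) 1 (phi p (L2 p))).coeff 1
      = C (L2 p) * BbA p Q0 Q1 := by
    rw [PsiL2 p hp Q0 Q1 hQ0 hQ1]
    rw [Polynomial.coeff_add, Polynomial.coeff_add, Polynomial.coeff_mul_X_pow',
      if_neg (by omega : ¬ p ≤ 1)]
    simp
  have hc0L21 : (MvPolynomial.finSuccEquiv (Rp p) 1 (phi p (L21 p))).coeff 0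
      = C (L2 p) * CCA p Q0 Q1 := by
    rw [PsiL21 p hp Q0 Q1 hQ0 hQ1]
    rw [Polynomial.coeff_add, Polynomial.coeff_add, Polynomial.coeff_mul_X_pow',
      if_neg (by omega : ¬ p^2 ≤ 0)]
    simp
  have hc1L21 : (MvPolynomial.finSuccEquiv (Rp p) 1 (phi p (L21 p))).coeff 1
      = C (L2 p) * DdA p Q0 Q1 := by
    rw [PsiL21 p hp Q0 Q1 hQ0 hQ1]
    rw [Polynomial.coeff_add, Polynomial.coeff_add, Polynomial.coeff_mul_X_pow',
      if_neg (by omega : ¬ p^2 ≤ 1)]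
    simp
  set F := (MvPolynomial.finSuccEquiv (Rp p) 1 (phi p Q1)).coeff 0 with hF
  set G := (MvPolynomial.finSuccEquiv (Rp p) 1 (phi p Q1)).coeff 1 with hG
  have h0 : F * (C (L2 p) * DDA p Q0 Q1) = C (L2 p) * CCA p Q0 Q1 := by
    have h := congrArg (fun q => q.coeff 0) hmul
    simp only [Polynomial.mul_coeff_zero] at h
    rw [hc0L2, hc0L21] at h
    exact h
  have h1 : F * (C (L2 p) * BbA p Q0 Q1) + G * (C (L2 p) * DDA p Q0 Q1)
      = C (L2 p) * DdA p Q0 Q1 := by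
    have h := congrArg (fun q => q.coeff 1) hmul
    simp only [Polynomial.coeff_mul, Finset.Nat.sum_antidiagonal_eq_sum_range_succ_mk,
      Finset.sum_range_succ, Finset.sum_range_one] at h
    norm_num at h
    rw [hc1L2, hc0L2, hc1L21] at h
    linear_combination h
  have hL2C : (C (L2 p) : Ap p) ≠ 0 := by
    simpa using L2_ne_zero p hp
  have hFDD : F * DDA p Q0 Q1 = CCA p Q0 Q1 := by
    apply mul_left_cancel₀ hL2C
    rw [← h0]; ring
  have hGDD2 : G * (DDA p Q0 Q1)^2
      = DdA p Q0 Q1 * DDA p Q0 Q1 - CCA p Q0 Q1 * BbA p Q0 Q1 := by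
    apply mul_left_cancel₀ hL2C
    linear_combination DDA p Q0 Q1 * h1 - C (L2 p) * BbA p Q0 Q1 * hFDD
  have ident4 : DdA p Q0 Q1 * DDA p Q0 Q1 - CCA p Q0 Q1 * BbA p Q0 Q1
      = C Q0 * (1 - C Q0 * X 0) * (DDA p Q0 Q1)^p := by
    rw [DDA, BbA, CCA, DdA]
    simp only [add_pow_char, sub_pow_char, mul_pow, one_pow, map_mul, map_pow, map_sub,
      map_add, map_one]
    ring
  have hDDne : DDA p Q0 Q1 ≠ 0 := by
    intro hz
    have hcc : constantCoeff (DDA p Q0 Q1) = 1 := by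
      simp [DDA, zero_pow (by omega : p ≠ 0)]
    rw [hz] at hcc
    simp at hcc
  have hDp : (DDA p Q0 Q1)^p = (DDA p Q0 Q1)^(p-2) * (DDA p Q0 Q1)^2 := by
    rw [← pow_add]; congr 1; omega
  apply mul_right_cancel₀ (pow_ne_zero 2 hDDne)
  rw [hGDD2, ident4, hDp]; ring
end

noncomputable def wsc (p : ℕ) (Q0 Q1 : Rp p) (i m : ℕ) : Rp p :=
  (-1 : Rp p)^m * (((p-2).choose i : ℕ) : Rp p)
    * ((((p+1)*(p-2-i)+1).choose m : ℕ) : Rp p) * Q0^(m+1) * Q1^((p+1)*i)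



section
variable (p : ℕ) (hp : p.Prime) (Q0 Q1 : Rp p)
  (hQ0 : Q0 * L2 p = L20 p) (hQ1 : Q1 * L2 p = L21 p)

include hp in
lemma Gsum : C Q0 * (1 - C Q0 * X 0) * (DDA p Q0 Q1)^(p-2)
    = ∑ i ∈ range (p-1), ∑ m ∈ range (p^2),
        C (wsc p Q0 Q1 i m) * (X 0 : Ap p)^(p*i+m) := by
  haveI : Fact p.Prime := ⟨hp⟩
  have hp2 := hp.two_le
  have hDD' : DDA p Q0 Q1 = C (Q1^(p+1)) * X 0^p + (1 - C Q0 * X 0)^(p+1) := by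
    rw [DDA, show ((1:Ap p) - C Q0 * X 0)^(p+1) = (1 - C Q0 * X 0)^p * (1 - C Q0 * X 0)
      from pow_succ _ _, sub_pow_char, mul_pow, one_pow]
    simp only [map_pow]
    ring
  rw [hDD', add_pow, show p - 2 + 1 = p - 1 from by omega, Finset.mul_sum]
  refine Finset.sum_congr rfl ?_
  intro i hi
  rw [Finset.mem_range] at hi
  rw [← pow_mul]
  rw [show C Q0 * (1 - C Q0 * X 0) * ((C (Q1^(p+1)) * X 0^p)^i
        * (1 - C Q0 * X 0)^((p+1)*(p-2-i)) * (((p-2).choose i : ℕ) : Ap p))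
      = (C Q0 * (C (Q1^(p+1)) * X 0^p)^i * (((p-2).choose i : ℕ) : Ap p))
        * (1 - C Q0 * X 0)^((p+1)*(p-2-i)+1) from by rw [pow_succ]; ring]
  rw [show ((1 : Ap p) - C Q0 * X 0) = -(C Q0 * X 0) + 1 from by ring, add_pow,
    Finset.mul_sum]
  have hsub : (p+1)*(p-2-i)+1+1 ≤ p^2 := by
    obtain ⟨d, hd1, hd2⟩ : ∃ d, p - 2 - i = d ∧ d ≤ p - 2 := ⟨p-2-i, rfl, by omega⟩
    obtain ⟨e, hpe⟩ : ∃ e, p = d + e + 2 := ⟨p - d - 2, by omega⟩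
    rw [hd1]
    nlinarith [hpe, sq_nonneg (d+e)]
  rw [← Finset.sum_subset (Finset.range_subset_range.mpr hsub) ?vanish]
  · refine Finset.sum_congr rfl fun m hm => ?_
    rw [wsc]
    simp only [map_mul, map_pow, map_neg, map_one, map_natCast]
    ring
  case vanish =>
    intro m hmem hnot
    rw [Finset.mem_range] at hmem hnot
    push_neg at hnot
    rw [wsc, Nat.choose_eq_zero_of_lt (show (p+1)*(p-2-i)+1 < m by omega)]
    simp

include hp hQ0 hQ1 in
lemma Stform (j : ℕ) : St p 1 j Q1 = ∑ i ∈ range (p-1), ∑ m ∈ range (p^2),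
    (if p*i + m = j then wsc p Q0 Q1 i m else 0) := by
  rw [St_eq_coeff, Gform p hp Q0 Q1 hQ0 hQ1, Gsum p hp Q0 Q1, coeff_sum]
  refine Finset.sum_congr rfl fun i _ => ?_
  rw [coeff_sum]
  refine Finset.sum_congr rfl fun m _ => ?_
  rw [coeff_C_mul, coeff_X_pow]
  by_cases hc : p*i+m = j
  · rw [if_pos (by rw [hc]), if_pos hc, mul_one]
  · rw [if_neg, if_neg hc, mul_zero]
    intro hEq
    exact hc (by
      have h2 := DFunLike.congr_fun hEq (0 : Fin 1)
      simpa using h2)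
end

/-- `(-1)^r * C(p-1-i, r) = C(r+i, r)` in `ZMod p`, for `i, r < p`. -/
lemma lemA (p : ℕ) (hp : p.Prime) (i r : ℕ) (hi : i < p) (hr : r < p) :
    ((p - 1 - i).choose r : ZMod p) = (-1 : ZMod p) ^ r * ((r + i).choose r : ZMod p) := by
  haveI : Fact p.Prime := ⟨hp⟩
  by_cases hcase : r ≤ p - 1 - i
  · -- use descFactorial
    have hfac : ∀ n : ℕ, (n.descFactorial r : ZMod p) = (r.factorial : ZMod p) * (n.choose r) := by
      intro n
      rw [Nat.descFactorial_eq_factorial_mul_choose]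
      push_cast; ring
    have hprod1 : (((p - 1 - i).descFactorial r : ℕ) : ZMod p)
        = (-1 : ZMod p) ^ r * (((r + i).descFactorial r : ℕ) : ZMod p) := by
      rw [Nat.descFactorial_eq_prod_range, Nat.descFactorial_eq_prod_range]
      push_cast
      rw [← Finset.prod_range_reflect (fun t => ((r + i - t : ℕ) : ZMod p)) r]
      rw [Finset.pow_eq_prod_const, ← Finset.prod_mul_distrib]
      apply Finset.prod_congr rfl
      intro t ht
      simp only [Finset.mem_range] at ht
      have h1 : (p - 1 - i - t) + (i + t + 1) = p := by omega
      have h2 : r + i - (r - 1 - t) = i + t + 1 := by omega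
      rw [h2]
      have : ((p - 1 - i - t : ℕ) : ZMod p) + ((i + t + 1 : ℕ) : ZMod p) = 0 := by
        rw [← Nat.cast_add, h1, ZMod.natCast_self]
      linear_combination this
    rw [hfac, hfac] at hprod1
    have hrfac : IsUnit ((r.factorial : ZMod p)) := by
      apply isUnit_iff_ne_zero.mpr
      rw [Ne, ZMod.natCast_eq_zero_iff]
      exact fun hdvd => Nat.Prime.not_dvd_one hp (by
        have := (Nat.Prime.dvd_factorial hp).mp hdvd; omega)
    apply hrfac.mul_left_cancel
    rw [hprod1]; ring
  · -- both sides zero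
    push_neg at hcase
    rw [Nat.choose_eq_zero_of_lt hcase]
    have hdvd : (p : ℕ) ∣ (r + i).choose r := by
      exact Nat.Prime.dvd_choose_add hp hr hi (by omega)
    rw [(ZMod.natCast_eq_zero_iff _ _).mpr hdvd]
    push_cast; ring

lemma scalar_cong (p : ℕ) (hp : p.Prime) (hodd : Odd p) (i k r : ℕ)
    (hik : i ≤ k) (hk : k ≤ p - 2) (hr : r < p) :
    ((-1 : ZMod p))^((k-i)*p + r) * ((p-2).choose i : ZMod p)
      * ((((p+1)*(p-2-i)+1).choose ((k-i)*p + r)) : ZMod p)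
    = ((k : ZMod p)+1) * (-1 : ZMod p)^i * (k.choose i : ZMod p)
        * ((r+i).choose i : ZMod p) := by
  haveI : Fact p.Prime := ⟨hp⟩
  have hp2 := hp.two_le
  have hi : i < p := by omega
  have hN : (p+1)*(p-2-i)+1 = p*(p-2-i) + (p-1-i) := by
    obtain ⟨d, hd, hd2⟩ : ∃ d, p-2-i = d ∧ p-1-i = d+1 := ⟨_, rfl, by omega⟩
    rw [hd, hd2]; ring
  have hmod : (p*(p-2-i) + (p-1-i)) % p = p-1-i := by
    rw [Nat.mul_add_mod, Nat.mod_eq_of_lt (by omega)]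
  have hdiv : (p*(p-2-i) + (p-1-i)) / p = p-2-i := by
    rw [Nat.mul_add_div (by omega), Nat.div_eq_of_lt (by omega), add_zero]
  have hmod2 : ((k-i)*p + r) % p = r := by
    rw [mul_comm, Nat.mul_add_mod, Nat.mod_eq_of_lt hr]
  have hdiv2 : ((k-i)*p + r) / p = k-i := by
    rw [mul_comm, Nat.mul_add_div (by omega), Nat.div_eq_of_lt hr, add_zero]
  have lucas : ((((p+1)*(p-2-i)+1).choose ((k-i)*p + r)) : ZMod p)
      = ((p-1-i).choose r : ZMod p) * ((p-2-i).choose (k-i) : ZMod p) := by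
    have hL := @Choose.choose_modEq_choose_mod_mul_choose_div
      ((p+1)*(p-2-i)+1) ((k-i)*p+r) p _
    have hcast := (ZMod.intCast_eq_intCast_iff _ _ _).mpr hL
    push_cast at hcast
    rw [hN, hmod, hdiv, hmod2, hdiv2] at hcast
    rw [hN]
    exact hcast
  have e1 : ((p-2).choose i : ZMod p) = (-1 : ZMod p)^i * ((i+1 : ℕ) : ZMod p) := by
    have h := lemA p hp 1 i (by omega) hi
    rw [show p-1-1 = p-2 by omega] at h
    rw [h, Nat.choose_succ_self_right]
  have e2 : ((p-1-i).choose r : ZMod p) = (-1 : ZMod p)^r * ((r+i).choose r : ZMod p) :=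
    lemA p hp i r hi hr
  have e3 : ((p-2-i).choose (k-i) : ZMod p)
      = (-1 : ZMod p)^(k-i) * ((k+1).choose (k-i) : ZMod p) := by
    have h := lemA p hp (i+1) (k-i) (by omega) (by omega)
    rw [show p-1-(i+1) = p-2-i by omega, show (k-i)+(i+1) = k+1 by omega] at h
    exact h
  have hsign : ((-1 : ZMod p))^((k-i)*p + r) = (-1 : ZMod p)^(k-i) * (-1 : ZMod p)^r := by
    rw [pow_add, mul_comm (k-i) p, pow_mul, Odd.neg_one_pow hodd]
  have hNat : (i+1) * ((k+1).choose (k-i)) * ((r+i).choose r)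
      = (k+1) * (k.choose i) * ((r+i).choose i) := by
    have hsymm1 : (k+1).choose (k-i) = (k+1).choose (i+1) := by
      rw [← Nat.choose_symm (show i+1 ≤ k+1 by omega), show k+1-(i+1) = k-i by omega]
    have hsymm2 : (r+i).choose r = (r+i).choose i := by
      rw [← Nat.choose_symm (show i ≤ r+i by omega), show r+i-i = r by omega]
    have hmc := Nat.add_one_mul_choose_eq k i
    replace hmc := hmc
    rw [hsymm1, hsymm2]
    calc (i+1) * ((k+1).choose (i+1)) * ((r+i).choose i)
        = ((k+1).choose (i+1) * (i+1)) * ((r+i).choose i) := by ring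
      _ = ((k+1) * k.choose i) * ((r+i).choose i) := by rw [← hmc]
      _ = _ := by ring
  have lift : ((i+1 : ℕ) : ZMod p) * (((k+1).choose (k-i) : ℕ) : ZMod p)
        * (((r+i).choose r : ℕ) : ZMod p)
      = ((k : ZMod p)+1) * ((k.choose i : ℕ) : ZMod p) * (((r+i).choose i : ℕ) : ZMod p) := by
    have := congrArg (fun n : ℕ => (n : ZMod p)) hNat
    push_cast at this
    push_cast
    linear_combination this
  have sq : ∀ x:ℕ, ((-1 : ZMod p))^x * (-1 : ZMod p)^x = 1 := by
    intro x; rw [← mul_pow]; norm_num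
  rw [lucas, e1, e2, e3, hsign]
  calc ((-1:ZMod p)^(k-i) * (-1:ZMod p)^r) * ((-1:ZMod p)^i * ((i+1:ℕ) : ZMod p))
        * (((-1:ZMod p)^r * ((r+i).choose r : ZMod p))
          * ((-1:ZMod p)^(k-i) * ((k+1).choose (k-i) : ZMod p)))
      = ((-1:ZMod p)^(k-i) * (-1:ZMod p)^(k-i)) * ((-1:ZMod p)^r * (-1:ZMod p)^r)
        * ((-1:ZMod p)^i * (((i+1:ℕ) : ZMod p) * (((k+1).choose (k-i) : ℕ) : ZMod p)
            * (((r+i).choose r : ℕ) : ZMod p))) := by ring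
    _ = (-1:ZMod p)^i * (((i+1:ℕ) : ZMod p) * (((k+1).choose (k-i) : ℕ) : ZMod p)
            * (((r+i).choose r : ℕ) : ZMod p)) := by rw [sq, sq]; ring
    _ = _ := by rw [show ((i+1:ℕ) : ZMod p) * (((k+1).choose (k-i) : ℕ) : ZMod p)
            * (((r+i).choose r : ℕ) : ZMod p)
          = ((k : ZMod p)+1) * ((k.choose i : ℕ) : ZMod p)
            * (((r+i).choose i : ℕ) : ZMod p) from lift]; ring

theorem st_1j_Q21 (p : ℕ) (hp : p.Prime) (hodd : Odd p)
    (Q0 Q1 : MvPolynomial (Fin 2) (ZMod p))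
    (hQ0 : Q0 * L2 p = L20 p) (hQ1 : Q1 * L2 p = L21 p)
    (j : ℕ) :
    (∀ k r : ℕ, k < p → r < p → j = k * p + r →
      St p 1 j Q1 = C ((k : ZMod p) + 1) * Q0 ^ (r + 1) *
        ∑ i ∈ Finset.range (k + 1),
          (-1 : MvPolynomial (Fin 2) (ZMod p)) ^ i *
            C ((k.choose i : ZMod p)) * C (((r + i).choose i : ZMod p)) *
            Q0 ^ ((k - i) * p) * Q1 ^ (i * (p + 1))) ∧
    (p ^ 2 ≤ j → St p 1 j Q1 = 0) := by
  haveI : Fact p.Prime := ⟨hp⟩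
  have hp2 := hp.two_le
  constructor
  · intro k r hk hr hj
    subst hj
    rw [Stform p hp Q0 Q1 hQ0 hQ1]
    by_cases hk1 : k = p - 1
    · -- k = p-1 : both sides vanish
      have hkk : ((k : ZMod p) + 1) = 0 := by
        subst hk1
        have h9 : (((p-1) + 1 : ℕ) : ZMod p) = 0 := by
          rw [show p-1+1 = p by omega, ZMod.natCast_self]
        push_cast at h9
        linear_combination h9
      rw [hkk, map_zero, zero_mul, zero_mul]
      apply Finset.sum_eq_zero; intro i hi
      apply Finset.sum_eq_zero; intro m hm
      rw [Finset.mem_range] at hi hm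
      by_cases hc : p*i + m = k*p + r
      · have hbound : (p+1)*(p-2-i)+1 < m := by
          obtain ⟨d, hd, hpd⟩ : ∃ d, p-2-i = d ∧ i + d + 2 = p := ⟨_, rfl, by omega⟩
          have hk1' : k + 1 = p := by omega
          have hkp' : k*p + p = p*p := by rw [← hk1']; ring
          have hpi : p*i + p*d + 2*p = p*p := by rw [← hpd]; ring
          have h6 : (p+1)*d = p*d + d := by ring
          rw [hd]
          omega
        rw [if_pos hc, wsc, Nat.choose_eq_zero_of_lt hbound]
        simp
      · rw [if_neg hc]
    · -- main case : k ≤ p - 2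
      have hkp2 : k ≤ p - 2 := by omega
      have inner : ∀ i ∈ Finset.range (p-1),
          (∑ m ∈ Finset.range (p^2), if p*i + m = k*p + r then wsc p Q0 Q1 i m else 0)
          = if i ≤ k then wsc p Q0 Q1 i ((k-i)*p + r) else 0 := by
        intro i hi
        rw [Finset.mem_range] at hi
        by_cases hik : i ≤ k
        · rw [if_pos hik]
          have hq : p*i + ((k-i)*p + r) = k*p + r := by
            have h5 : p*i + (k-i)*p = k*p := by
              rw [mul_comm p i, ← add_mul, show i + (k-i) = k by omega]
            omega
          have hkey : ∀ m, (p*i + m = k*p + r) ↔ m = (k-i)*p + r := by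
            intro m; constructor <;> (intro h; omega)
          rw [Finset.sum_congr rfl (fun m _ => by rw [if_congr (hkey m) rfl rfl]),
            Finset.sum_ite_eq' (Finset.range (p^2)) ((k-i)*p + r) (wsc p Q0 Q1 i)]
          rw [if_pos]
          rw [Finset.mem_range]
          have h1 : (k-i+1) * p ≤ p * p := Nat.mul_le_mul_right p (by omega)
          have h2 : (k-i+1)*p = (k-i)*p + p := by rw [add_mul, one_mul]
          have h3 : p^2 = p*p := sq p
          omega
        · rw [if_neg hik]
          apply Finset.sum_eq_zero; intro m hm
          rw [if_neg]
          intro hc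
          have h1 : (k+1) * p ≤ i * p := Nat.mul_le_mul_right p (by omega)
          have h2 : (k+1)*p = k*p + p := by rw [add_mul, one_mul]
          have h3 : i*p = p*i := mul_comm i p
          omega
      rw [Finset.sum_congr rfl inner]
      rw [← Finset.sum_subset (Finset.range_subset_range.mpr (show k+1 ≤ p-1 by omega))
          (fun x _ hx => by
            rw [Finset.mem_range] at hx
            rw [if_neg (by omega)])]
      rw [Finset.mul_sum]
      refine Finset.sum_congr rfl fun i hi => ?_
      rw [Finset.mem_range] at hi
      have hik : i ≤ k := by omega
      rw [if_pos hik, wsc]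
      have hζ := scalar_cong p hp hodd i k r hik hkp2 hr
      have hζR := congrArg (MvPolynomial.C : ZMod p → Rp p) hζ
      simp only [map_mul, map_pow, map_add, map_neg, map_one, map_natCast] at hζR
      simp only [map_add, map_natCast, map_one]
      linear_combination (Q0^((k-i)*p + r + 1) * Q1^((p+1)*i)) * hζR
  · intro hj
    rw [Stform p hp Q0 Q1 hQ0 hQ1]
    apply Finset.sum_eq_zero; intro i hi
    apply Finset.sum_eq_zero; intro m hm
    rw [Finset.mem_range] at hi hm
    by_cases hc : p*i + m = j
    · have hbound : (p+1)*(p-2-i)+1 < m := by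
        obtain ⟨d, hd, hpd⟩ : ∃ d, p-2-i = d ∧ i + d + 2 = p := ⟨_, rfl, by omega⟩
        have hpi : p*i + p*d + 2*p = p*p := by rw [← hpd]; ring
        have h6 : (p+1)*d = p*d + d := by ring
        have h7 : p^2 = p*p := sq p
        rw [hd]
        omega
      rw [if_pos hc, wsc, Nat.choose_eq_zero_of_lt hbound]
      simp
    · rw [if_neg hc]
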